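/- Let n, M be positive integers, d := (M+1)·n, fix k* ∈ {0,…,n−1}, and let w₀,…,w_{d−1} > 0 be positive real weights. Define V := Σ_{l=0}^{M} w_{k*+ln}², and let α̂ ∈ ℂ^d be the vector with α̂_j = w_j²/V if j ∈ {k*, k*+n, k*+2n, …, k*+Mn} and α̂_j = 0 otherwise. Then α̂ is the unique minimizer of the weighted norm Σ_{j=0}^{d−1} |α_j|²/w_j² over all α ∈ ℂ^d satisfying the interpolation constraints Σ_{k=0}^{d−1} α_k · exp(2πi k j/n) = exp(2πi k* j/n) for every j ∈ {0,…,n−1}. In particular, the survival factor of the true frequency k* equals α̂_{k*} = w_{k*}² / Σ_{l=0}^{M} w_{k*+ln}², so the true signal coefficient is attenuated by exactly the ratio of its squared weight to the total squared weight of itself and all its exact aliases. -/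

import Mathlib

open Complex Finset

private lemma expMod (n : ℕ) (hn : 0 < n) (k j : ℕ) :
    Complex.exp (2 * Real.pi * Complex.I * (k : ℂ) * (j : ℂ) / (n : ℂ)) =
    Complex.exp (2 * Real.pi * Complex.I * ((k % n : ℕ) : ℂ) * (j : ℂ) / (n : ℂ)) := by
  have hne : (n : ℂ) ≠ 0 := Nat.cast_ne_zero.mpr hn.ne'
  have hk : (k : ℂ) = (n : ℂ) * ((k / n : ℕ) : ℂ) + ((k % n : ℕ) : ℂ) := by
    conv_lhs => rw [← Nat.div_add_mod k n]
    push_cast; ring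
  rw [hk]
  have : 2 * (Real.pi : ℂ) * Complex.I * ((n : ℂ) * ((k / n : ℕ) : ℂ) + ((k % n : ℕ) : ℂ)) * (j : ℂ) / (n : ℂ)
      = ((k / n * j : ℕ) : ℂ) * (2 * Real.pi * Complex.I)
        + 2 * Real.pi * Complex.I * ((k % n : ℕ) : ℂ) * (j : ℂ) / (n : ℂ) := by
    field_simp
    push_cast; ring
  rw [this, Complex.exp_add]
  have h1 : Complex.exp (((k / n * j : ℕ) : ℂ) * (2 * Real.pi * Complex.I)) = 1 := by
    exact_mod_cast Complex.exp_int_mul_two_pi_mul_I ((k / n * j : ℕ) : ℤ)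
  rw [h1, one_mul]

private lemma orth (n : ℕ) (hn : 0 < n) (r kstar : ℕ) (hr : r < n) (hk : kstar < n) :
    ∑ j : Fin n, Complex.exp (2 * Real.pi * Complex.I * (r : ℂ) * ((j : ℕ) : ℂ) / (n : ℂ)) *
      (Complex.exp (2 * Real.pi * Complex.I * (kstar : ℂ) * ((j : ℕ) : ℂ) / (n : ℂ)))⁻¹ =
    if r = kstar then (n : ℂ) else 0 := by
  have hne : (n : ℂ) ≠ 0 := Nat.cast_ne_zero.mpr hn.ne'
  set z : ℂ := 2 * Real.pi * Complex.I * ((r : ℂ) - (kstar : ℂ)) / (n : ℂ) with hz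
  have hterm : ∀ j : Fin n,
      Complex.exp (2 * Real.pi * Complex.I * (r : ℂ) * ((j : ℕ) : ℂ) / (n : ℂ)) *
      (Complex.exp (2 * Real.pi * Complex.I * (kstar : ℂ) * ((j : ℕ) : ℂ) / (n : ℂ)))⁻¹
      = Complex.exp z ^ (j : ℕ) := by
    intro j
    rw [← Complex.exp_neg, ← Complex.exp_add, ← Complex.exp_nat_mul]
    congr 1
    rw [hz]; field_simp; ring
  rw [Finset.sum_congr rfl (fun j _ => hterm j)]
  rw [Fin.sum_univ_eq_sum_range (fun i => Complex.exp z ^ i)]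
  by_cases h : r = kstar
  · subst h
    simp [hz]
  · rw [if_neg h]
    have hx1 : Complex.exp z ≠ 1 := by
      intro hx
      obtain ⟨m, hm⟩ := Complex.exp_eq_one_iff.mp hx
      rw [hz] at hm
      have hπI : (2 : ℂ) * Real.pi * Complex.I ≠ 0 := by
        simp [Real.pi_ne_zero, Complex.I_ne_zero]
      have h2 : (r : ℂ) - (kstar : ℂ) = (m : ℂ) * (n : ℂ) := by
        field_simp at hm
        apply mul_left_cancel₀ hπI
        linear_combination (2 * (Real.pi : ℂ) * Complex.I) * hm
      have h3 : (r : ℤ) - (kstar : ℤ) = m * n := by exact_mod_cast h2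
      have hdvd : (n : ℤ) ∣ (r : ℤ) - kstar := ⟨m, by linarith⟩
      have habs : |(r : ℤ) - kstar| < (n : ℤ) := by
        rw [abs_lt]; omega
      have := Int.eq_zero_of_abs_lt_dvd hdvd habs
      have : r = kstar := by omega
      exact h this
    rw [geom_sum_eq hx1]
    have hxn : Complex.exp z ^ n = 1 := by
      rw [← Complex.exp_nat_mul]
      have : (n : ℂ) * z = (((r : ℤ) - (kstar : ℤ) : ℤ) : ℂ) * (2 * Real.pi * Complex.I) := by
        rw [hz]; field_simp; push_cast; ring
      rw [this]
      exact Complex.exp_int_mul_two_pi_mul_I ((r : ℤ) - kstar)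
    rw [hxn, sub_self, zero_div]

/-- Let `d = (M+1) n` and consider the complex Fourier features
`f_k(x) = exp(2πi k x)` sampled at the regularly spaced points `x_j = j/n`, `j < n`.
Fix a true frequency `kstar < n` and positive weights `w`.  With
`V = Σ_{j ≡ kstar (mod n)} w_j²`, the vector `α̂` with `α̂_j = w_j²/V` on the alias set
`{j : j ≡ kstar (mod n)}` and `0` elsewhere interpolates the signal
`y_j = exp(2πi kstar j / n)`, is the unique minimizer of the weighted norm
`Σ_j |α_j|²/w_j²` among all interpolating coefficient vectors, and in particular the
survival factor of the true frequency is `α̂_{kstar} = w_{kstar}²/V`. -/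
theorem weighted_l2_interpolation_fourier_aliases
    (n M : ℕ) (hn : 0 < n) (hM : 0 < M) (d : ℕ) (hd : d = (M + 1) * n)
    (kstar : ℕ) (hk : kstar < n)
    (w : Fin d → ℝ) (hw : ∀ j, 0 < w j)
    (V : ℝ)
    (hV : V = ∑ j ∈ Finset.univ.filter (fun j : Fin d => (j : ℕ) % n = kstar), (w j) ^ 2)
    (αhat : Fin d → ℂ)
    (hαhat : ∀ j : Fin d,
      αhat j = if (j : ℕ) % n = kstar then (((w j) ^ 2 / V : ℝ) : ℂ) else 0) :
    -- `α̂` interpolates the sampled true signal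
    (∀ j : Fin n, ∑ k : Fin d,
        αhat k * Complex.exp (2 * Real.pi * Complex.I * ((k : ℕ) : ℂ) * ((j : ℕ) : ℂ) / n) =
      Complex.exp (2 * Real.pi * Complex.I * (kstar : ℂ) * ((j : ℕ) : ℂ) / n)) ∧
    -- `α̂` is the unique minimizer of the weighted norm among interpolators
    (∀ α : Fin d → ℂ,
      (∀ j : Fin n, ∑ k : Fin d,
          α k * Complex.exp (2 * Real.pi * Complex.I * ((k : ℕ) : ℂ) * ((j : ℕ) : ℂ) / n) =
        Complex.exp (2 * Real.pi * Complex.I * (kstar : ℂ) * ((j : ℕ) : ℂ) / n)) →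
      α ≠ αhat →
      ∑ j, Complex.normSq (αhat j) / (w j) ^ 2 < ∑ j, Complex.normSq (α j) / (w j) ^ 2) ∧
    -- the survival factor of the true frequency `kstar`
    (∀ j : Fin d, (j : ℕ) = kstar → αhat j = (((w j) ^ 2 / V : ℝ) : ℂ)) := by
  have hnen : (n : ℂ) ≠ 0 := Nat.cast_ne_zero.mpr hn.ne'
  have hkd : kstar < d := by
    rw [hd]
    calc kstar < n := hk
    _ ≤ (M + 1) * n := by nlinarith
  set S : Finset (Fin d) := Finset.univ.filter (fun j : Fin d => (j : ℕ) % n = kstar) with hS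
  have hVpos : 0 < V := by
    rw [hV]
    apply Finset.sum_pos
    · intro i _; exact pow_pos (hw i) 2
    · refine ⟨⟨kstar, hkd⟩, ?_⟩
      simp [hS, Finset.mem_filter, Nat.mod_eq_of_lt hk]
  have hahatmem : ∀ k ∈ S, αhat k = (((w k) ^ 2 / V : ℝ) : ℂ) := by
    intro k hkS
    rw [hαhat k, if_pos (by simpa [hS] using hkS)]
  have hahatsum : ∑ k ∈ S, αhat k = 1 := by
    calc ∑ k ∈ S, αhat k = ∑ k ∈ S, (((w k) ^ 2 / V : ℝ) : ℂ) :=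
          Finset.sum_congr rfl hahatmem
    _ = (((∑ k ∈ S, (w k) ^ 2) / V : ℝ) : ℂ) := by
          rw [Finset.sum_div]; push_cast; ring
    _ = 1 := by rw [← hV, div_self hVpos.ne']; norm_num
  -- interpolation, for any vector supported on S with coefficients summing to 1
  have interp : ∀ j : Fin n, ∑ k : Fin d,
      αhat k * Complex.exp (2 * Real.pi * Complex.I * ((k : ℕ) : ℂ) * ((j : ℕ) : ℂ) / n) =
      Complex.exp (2 * Real.pi * Complex.I * (kstar : ℂ) * ((j : ℕ) : ℂ) / n) := by
    intro j
    have h0 : ∀ k : Fin d, k ∈ Finset.univ →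
        αhat k * Complex.exp (2 * Real.pi * Complex.I * ((k : ℕ) : ℂ) * ((j : ℕ) : ℂ) / n) ≠ 0 →
        (k : ℕ) % n = kstar := by
      intro k _ hne0
      by_contra hc
      rw [hαhat k, if_neg hc, zero_mul] at hne0
      exact hne0 rfl
    rw [← Finset.sum_filter_of_ne h0]
    have h1 : ∀ k ∈ S,
        αhat k * Complex.exp (2 * Real.pi * Complex.I * ((k : ℕ) : ℂ) * ((j : ℕ) : ℂ) / n)
        = αhat k * Complex.exp (2 * Real.pi * Complex.I * (kstar : ℂ) * ((j : ℕ) : ℂ) / n) := by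
      intro k hkS
      have hmod : (k : ℕ) % n = kstar := by simpa [hS] using hkS
      rw [expMod n hn k j, hmod]
    rw [Finset.sum_congr rfl h1, ← Finset.sum_mul, hahatsum, one_mul]
  refine ⟨interp, ?_, ?_⟩
  · -- uniqueness / strict minimality
    intro α hα hne'
    -- Step 1: the alias-class sum of α equals 1
    have hβ : ∑ k ∈ S, α k = 1 := by
      have key : (n : ℂ) * ∑ k ∈ S, α k = (n : ℂ) * 1 := by
        calc (n : ℂ) * ∑ k ∈ S, α k
            = ∑ k : Fin d, α k * (if (k : ℕ) % n = kstar then (n : ℂ) else 0) := by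
              rw [Finset.mul_sum, hS, Finset.sum_filter]
              exact Finset.sum_congr rfl fun k _ => by
                by_cases hkk : (k : ℕ) % n = kstar <;> simp [hkk, mul_comm]
          _ = ∑ k : Fin d, α k * ∑ j : Fin n,
                Complex.exp (2 * Real.pi * Complex.I * (((k : ℕ) % n : ℕ) : ℂ) * ((j : ℕ) : ℂ) / n) *
                (Complex.exp (2 * Real.pi * Complex.I * (kstar : ℂ) * ((j : ℕ) : ℂ) / n))⁻¹ := by
              refine Finset.sum_congr rfl fun k _ => ?_
              rw [orth n hn ((k : ℕ) % n) kstar (Nat.mod_lt _ hn) hk]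
          _ = ∑ k : Fin d, ∑ j : Fin n,
                (α k * Complex.exp (2 * Real.pi * Complex.I * ((k : ℕ) : ℂ) * ((j : ℕ) : ℂ) / n)) *
                (Complex.exp (2 * Real.pi * Complex.I * (kstar : ℂ) * ((j : ℕ) : ℂ) / n))⁻¹ := by
              refine Finset.sum_congr rfl fun k _ => ?_
              rw [Finset.mul_sum]
              refine Finset.sum_congr rfl fun j _ => ?_
              rw [← expMod n hn k j]; ring
          _ = ∑ j : Fin n,
                (∑ k : Fin d, α k * Complex.exp (2 * Real.pi * Complex.I * ((k : ℕ) : ℂ) * ((j : ℕ) : ℂ) / n)) *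
                (Complex.exp (2 * Real.pi * Complex.I * (kstar : ℂ) * ((j : ℕ) : ℂ) / n))⁻¹ := by
              rw [Finset.sum_comm]
              refine Finset.sum_congr rfl fun j _ => ?_
              rw [Finset.sum_mul]
          _ = ∑ _j : Fin n, (1 : ℂ) := by
              refine Finset.sum_congr rfl fun j _ => ?_
              rw [hα j, mul_inv_cancel₀ (Complex.exp_ne_zero _)]
          _ = (n : ℂ) * 1 := by simp
      exact mul_left_cancel₀ hnen key
    -- Step 2: the cross term vanishes
    have hcross : ∑ j : Fin d, ((α j - αhat j) * (starRingEnd ℂ) (αhat j)).re / (w j) ^ 2 = 0 := by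
      have hterm : ∀ j : Fin d,
          ((α j - αhat j) * (starRingEnd ℂ) (αhat j)).re / (w j) ^ 2
          = if (j : ℕ) % n = kstar then (α j - αhat j).re / V else 0 := by
        intro j
        by_cases hj : (j : ℕ) % n = kstar
        · rw [hαhat j, if_pos hj, if_pos hj, Complex.conj_ofReal, Complex.mul_re,
            Complex.ofReal_re, Complex.ofReal_im, mul_zero, sub_zero]
          generalize (α j - (((w j) ^ 2 / V : ℝ) : ℂ)).re = X
          have hwne : w j ≠ 0 := (hw j).ne'
          field_simp
        · rw [hαhat j, if_neg hj, if_neg hj]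
          simp
      rw [Finset.sum_congr rfl (fun j _ => hterm j), ← Finset.sum_filter, ← hS,
        ← Finset.sum_div]
      have hre : ∑ j ∈ S, (α j - αhat j).re = (∑ j ∈ S, (α j - αhat j)).re := by
        exact (Complex.re_sum S _).symm
      rw [hre, Finset.sum_sub_distrib, hβ, hahatsum, sub_self]
      simp
    -- Step 3: Pythagoras-type decomposition
    have hdecomp : ∀ j : Fin d, Complex.normSq (α j) / (w j) ^ 2
        = Complex.normSq (α j - αhat j) / (w j) ^ 2 + Complex.normSq (αhat j) / (w j) ^ 2
          + 2 * (((α j - αhat j) * (starRingEnd ℂ) (αhat j)).re / (w j) ^ 2) := by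
      intro j
      have h1 : Complex.normSq (α j) = Complex.normSq ((α j - αhat j) + αhat j) := by
        rw [sub_add_cancel]
      rw [h1, Complex.normSq_add]
      ring
    have hsum : ∑ j, Complex.normSq (α j) / (w j) ^ 2
        = ∑ j, Complex.normSq (α j - αhat j) / (w j) ^ 2
          + ∑ j, Complex.normSq (αhat j) / (w j) ^ 2 := by
      rw [Finset.sum_congr rfl (fun j _ => hdecomp j), Finset.sum_add_distrib,
        Finset.sum_add_distrib, ← Finset.mul_sum, hcross, mul_zero, add_zero]
    have hpos : 0 < ∑ j, Complex.normSq (α j - αhat j) / (w j) ^ 2 := by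
      obtain ⟨j0, hj0⟩ := Function.ne_iff.mp hne'
      apply Finset.sum_pos'
      · intro i _
        exact div_nonneg (Complex.normSq_nonneg _) (le_of_lt (pow_pos (hw i) 2))
      · refine ⟨j0, Finset.mem_univ _, ?_⟩
        have h1 : 0 < Complex.normSq (α j0 - αhat j0) :=
          Complex.normSq_pos.mpr (sub_ne_zero.mpr hj0)
        exact div_pos h1 (pow_pos (hw j0) 2)
    linarith
  · -- survival factor
    intro j hj
    rw [hαhat j, if_pos (by rw [hj]; exact Nat.mod_eq_of_lt hk)]
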